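/- arXiv:1409.5922 — 4 statements merged into one kernel-verified Lean document; each statement's English description precedes it below -/
import Mathlib

section
/- In the square grid on ℤ², any dominating set X has upper density at least 1/5: limsup_{r→∞} |X ∩ B_r(0)| / |B_r(0)| ≥ 1/5. -/
open Filter

/-- The ℓ¹-ball of radius `r` around a vertex of the square grid `ℤ²`. -/
def gridBall (v : ℤ × ℤ) (r : ℕ) : Set (ℤ × ℤ) :=
  {p | |p.1 - v.1| + |p.2 - v.2| ≤ (r : ℤ)}

/-- The closed neighborhood of a vertex of the square grid. -/
def gridNbhd (v : ℤ × ℤ) : Set (ℤ × ℤ) :=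
  {v, (v.1 + 1, v.2), (v.1 - 1, v.2), (v.1, v.2 + 1), (v.1, v.2 - 1)}

/-- The open neighborhood of a vertex of the square grid. -/
def gridOpenNbhd (v : ℤ × ℤ) : Set (ℤ × ℤ) :=
  {(v.1 + 1, v.2), (v.1 - 1, v.2), (v.1, v.2 + 1), (v.1, v.2 - 1)}

/-- Upper density of a set of grid vertices with respect to ℓ¹-balls around 0. -/
noncomputable def upperDensity (X : Set (ℤ × ℤ)) : ℝ :=
  Filter.limsup
    (fun r : ℕ => ((X ∩ gridBall 0 r).ncard : ℝ) / ((gridBall 0 r).ncard)) Filter.atTop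

section Aux

open Finset

/-- Finset version of the ball around 0. -/
noncomputable def fBall (r : ℕ) : Finset (ℤ × ℤ) :=
  (Finset.Icc (-(r : ℤ)) r ×ˢ Finset.Icc (-(r : ℤ)) r).filter
    (fun p => |p.1| + |p.2| ≤ (r : ℤ))

lemma mem_fBall {r : ℕ} {p : ℤ × ℤ} : p ∈ fBall r ↔ |p.1| + |p.2| ≤ (r : ℤ) := by
  obtain ⟨x, y⟩ := p
  simp only [fBall, Finset.mem_filter, Finset.mem_product, Finset.mem_Icc]
  constructor
  · rintro ⟨-, h⟩; exact h
  · intro h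
    have hx : |x| ≤ (r : ℤ) := le_trans (le_add_of_nonneg_right (abs_nonneg y)) h
    have hy : |y| ≤ (r : ℤ) := le_trans (le_add_of_nonneg_left (abs_nonneg x)) h
    exact ⟨⟨abs_le.mp hx, abs_le.mp hy⟩, h⟩

lemma coe_fBall (r : ℕ) : (fBall r : Set (ℤ × ℤ)) = gridBall 0 r := by
  ext p
  simp [mem_fBall, gridBall]

lemma fBall_eq_biUnion (r : ℕ) :
    fBall r = (Finset.Icc (-(r : ℤ)) r).biUnion
      (fun x => (Finset.Icc (|x| - r) ((r : ℤ) - |x|)).image (fun y => (x, y))) := by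
  ext ⟨x, y⟩
  simp only [mem_fBall, Finset.mem_biUnion, Finset.mem_Icc, Finset.mem_image, Prod.mk.injEq]
  constructor
  · intro h
    have hx : |x| ≤ (r : ℤ) := le_trans (le_add_of_nonneg_right (abs_nonneg y)) h
    refine ⟨x, abs_le.mp hx, y, ?_, rfl, rfl⟩
    have hy := abs_le.mp (by omega : |y| ≤ (r : ℤ) - |x|)
    omega
  · rintro ⟨x', hx', y', hy', rfl, rfl⟩
    have h1 : |x'| = x' ∨ |x'| = -x' := abs_choice x'
    have h2 : |y'| = y' ∨ |y'| = -y' := abs_choice y'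
    omega

lemma sum_aux (r : ℕ) :
    ∑ x ∈ Finset.Icc (-(r : ℤ)) r, ((r : ℤ) - |x| + 1 - (|x| - r)).toNat
      = 2 * r ^ 2 + 2 * r + 1 := by
  induction r with
  | zero => simp
  | succ n ih =>
    have hsplit : Finset.Icc (-((n : ℤ) + 1)) ((n : ℤ) + 1)
        = insert ((n : ℤ) + 1) (insert (-((n : ℤ) + 1)) (Finset.Icc (-(n : ℤ)) n)) := by
      ext z
      simp only [Finset.mem_Icc, Finset.mem_insert]
      omega
    have h1 : ((n : ℤ) + 1) ∉ insert (-((n : ℤ) + 1)) (Finset.Icc (-(n : ℤ)) n) := by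
      simp only [Finset.mem_insert, Finset.mem_Icc]
      omega
    have h2 : (-((n : ℤ) + 1)) ∉ Finset.Icc (-(n : ℤ)) n := by
      simp only [Finset.mem_Icc]; omega
    push_cast
    rw [hsplit, Finset.sum_insert h1, Finset.sum_insert h2]
    have hsum : ∑ x ∈ Finset.Icc (-(n : ℤ)) n, (((n : ℤ) + 1) - |x| + 1 - (|x| - ((n : ℤ) + 1))).toNat
        = (∑ x ∈ Finset.Icc (-(n : ℤ)) n, ((n : ℤ) - |x| + 1 - (|x| - n)).toNat)
          + 2 * (Finset.Icc (-(n : ℤ)) n).card := by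
      rw [Finset.sum_congr rfl (g := fun x => ((n : ℤ) - |x| + 1 - (|x| - n)).toNat + 2)
        (fun x hx => ?_), Finset.sum_add_distrib, Finset.sum_const, smul_eq_mul, mul_comm]
      simp only [Finset.mem_Icc] at hx
      have : |x| ≤ (n : ℤ) := abs_le.mpr hx
      show (((n : ℤ) + 1) - |x| + 1 - (|x| - ((n : ℤ) + 1))).toNat
        = ((n : ℤ) - |x| + 1 - (|x| - (n : ℤ))).toNat + 2
      omega
    rw [hsum, ih, Int.card_Icc]
    have habs1 : |(n : ℤ) + 1| = (n : ℤ) + 1 := abs_of_nonneg (by positivity)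
    have habs2 : |-((n : ℤ) + 1)| = (n : ℤ) + 1 := by rw [abs_neg]; exact habs1
    rw [habs1, habs2]
    have : ((n : ℤ) + 1 - ((n : ℤ) + 1) + 1 - ((n : ℤ) + 1 - ((n : ℤ) + 1))).toNat = 1 := by omega
    rw [this]
    have : ((n : ℤ) + 1 - (-(n : ℤ)) ).toNat = 2 * n + 1 := by omega
    rw [this]
    ring

lemma card_fBall (r : ℕ) : (fBall r).card = 2 * r ^ 2 + 2 * r + 1 := by
  rw [fBall_eq_biUnion, Finset.card_biUnion, ← sum_aux r]
  · refine Finset.sum_congr rfl fun x _ => ?_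
    rw [Finset.card_image_of_injective _ (fun a b h => by simpa using h), Int.card_Icc]
  · intro a _ b _ hab
    simp only [Finset.disjoint_left, Finset.mem_image]
    rintro ⟨x, y⟩ ⟨y₁, _, h₁⟩ ⟨y₂, _, h₂⟩
    apply hab
    injection h₁ with h1a h1b
    injection h₂ with h2a h2b
    omega

lemma gridBall_finite (r : ℕ) : (gridBall 0 r).Finite := by
  rw [← coe_fBall]; exact (fBall r).finite_toSet

lemma ncard_gridBall (r : ℕ) : (gridBall 0 r).ncard = 2 * r ^ 2 + 2 * r + 1 := by
  rw [← coe_fBall, Set.ncard_coe_finset, card_fBall]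

lemma gridNbhd_symm {v x : ℤ × ℤ} (h : x ∈ gridNbhd v) : v ∈ gridNbhd x := by
  obtain ⟨a, b⟩ := v; obtain ⟨c, d⟩ := x
  simp only [gridNbhd, Set.mem_insert_iff, Set.mem_singleton_iff, Prod.mk.injEq] at h ⊢
  omega

lemma gridNbhd_dist {v x : ℤ × ℤ} (h : x ∈ gridNbhd v) :
    |x.1 - v.1| + |x.2 - v.2| ≤ 1 := by
  obtain ⟨a, b⟩ := v; obtain ⟨c, d⟩ := x
  simp only [gridNbhd, Set.mem_insert_iff, Set.mem_singleton_iff, Prod.mk.injEq] at h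
  show |c - a| + |d - b| ≤ 1
  have h1 : |c - a| = c - a ∨ |c - a| = -(c - a) := abs_choice _
  have h2 : |d - b| = d - b ∨ |d - b| = -(d - b) := abs_choice _
  omega

lemma gridNbhd_subset_ball {v x : ℤ × ℤ} {r : ℕ} (h : x ∈ gridNbhd v)
    (hv : v ∈ gridBall 0 r) : x ∈ gridBall 0 (r + 1) := by
  have hd := gridNbhd_dist h
  simp only [gridBall, Set.mem_setOf_eq, Prod.fst_zero, Prod.snd_zero, sub_zero] at hv ⊢
  have t1 : |x.1| ≤ |x.1 - v.1| + |v.1| := by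
    have := abs_add_le (x.1 - v.1) v.1; simpa using this
  have t2 : |x.2| ≤ |x.2 - v.2| + |v.2| := by
    have := abs_add_le (x.2 - v.2) v.2; simpa using this
  push_cast
  omega

/-- The key counting inequality: the ball of radius `r` is dominated by
`X ∩ B_{r+1}`, so its cardinality is at most `5` times larger. -/
lemma ball_le_five_mul (X : Set (ℤ × ℤ)) (hX : ∀ v : ℤ × ℤ, (gridNbhd v ∩ X).Nonempty)
    (r : ℕ) : (gridBall 0 r).ncard ≤ 5 * (X ∩ gridBall 0 (r + 1)).ncard := by
  classical
  set f : ℤ × ℤ → ℤ × ℤ := fun v => (hX v).choose with hf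
  have hfmem : ∀ v, f v ∈ gridNbhd v ∧ f v ∈ X := fun v => (hX v).choose_spec
  set T : Finset (ℤ × ℤ) := (fBall (r + 1)).filter (· ∈ X) with hT
  have hTcoe : (T : Set (ℤ × ℤ)) = X ∩ gridBall 0 (r + 1) := by
    ext p
    rw [Set.mem_inter_iff, ← coe_fBall]
    simp [hT, and_comm]
  have key : (fBall r).card ≤ 5 * T.card := by
    apply Finset.card_le_mul_card_image_of_maps_to (f := f) (t := T)
    · intro v hv
      rw [hT, Finset.mem_filter]
      have hball : f v ∈ gridBall 0 (r + 1) :=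
        gridNbhd_subset_ball (hfmem v).1 (by rw [← coe_fBall] at *; exact hv)
      refine ⟨?_, (hfmem v).2⟩
      rw [← Finset.mem_coe, coe_fBall]; exact hball
    · intro b _
      have hsub : (fBall r).filter (fun x => f x = b) ⊆
          ({b, (b.1 + 1, b.2), (b.1 - 1, b.2), (b.1, b.2 + 1), (b.1, b.2 - 1)} : Finset (ℤ × ℤ)) := by
        intro v hv
        rw [Finset.mem_filter] at hv
        have : v ∈ gridNbhd b := hv.2 ▸ gridNbhd_symm (hfmem v).1
        simpa [gridNbhd, Set.mem_insert_iff] using this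
      calc ((fBall r).filter (fun x => f x = b)).card
          ≤ _ := Finset.card_le_card hsub
        _ ≤ 5 := by
            apply le_trans (Finset.card_insert_le _ _)
            apply Nat.succ_le_succ
            apply le_trans (Finset.card_insert_le _ _)
            apply Nat.succ_le_succ
            apply le_trans (Finset.card_insert_le _ _)
            apply Nat.succ_le_succ
            apply le_trans (Finset.card_insert_le _ _)
            apply Nat.succ_le_succ
            simp
  calc (gridBall 0 r).ncard = (fBall r).card := by rw [← coe_fBall, Set.ncard_coe_finset]
    _ ≤ 5 * T.card := key
    _ = 5 * (X ∩ gridBall 0 (r + 1)).ncard := by rw [← hTcoe, Set.ncard_coe_finset]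

/-- The limit of the ratio of consecutive ball sizes divided by 5. -/
lemma tendsto_ratio :
    Tendsto (fun r : ℕ => ((2 * r ^ 2 + 2 * r + 1 : ℕ) : ℝ) /
      (5 * ((2 * (r + 1) ^ 2 + 2 * (r + 1) + 1 : ℕ) : ℝ))) atTop (nhds (1 / 5)) := by
  have h0 : Tendsto (fun n : ℕ => 1 / (n : ℝ)) atTop (nhds 0) :=
    tendsto_one_div_atTop_nhds_zero_nat
  have hnum : Tendsto (fun r : ℕ => (2 : ℝ) + 2 * (1 / r) + (1 / r) * (1 / r)) atTop
      (nhds 2) := by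
    have := (tendsto_const_nhds (x := (2:ℝ)) (f := atTop)).add
      (((tendsto_const_nhds (x := (2:ℝ)) (f := atTop)).mul h0).add (h0.mul h0))
    simpa using this.congr (fun r => by ring)
  have hden : Tendsto (fun r : ℕ => (10 : ℝ) + 30 * (1 / r) + 25 * ((1 / r) * (1 / r))) atTop
      (nhds 10) := by
    have := (tendsto_const_nhds (x := (10:ℝ)) (f := atTop)).add
      (((tendsto_const_nhds (x := (30:ℝ)) (f := atTop)).mul h0).add
        ((tendsto_const_nhds (x := (25:ℝ)) (f := atTop)).mul (h0.mul h0)))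
    simpa using this.congr (fun r => by ring)
  have hdiv : Tendsto (fun r : ℕ => ((2 : ℝ) + 2 * (1 / r) + (1 / r) * (1 / r)) /
      ((10 : ℝ) + 30 * (1 / r) + 25 * ((1 / r) * (1 / r)))) atTop (nhds (2 / 10)) :=
    hnum.div hden (by norm_num)
  have heq : ∀ᶠ r : ℕ in atTop,
      ((2 : ℝ) + 2 * (1 / r) + (1 / r) * (1 / r)) /
        ((10 : ℝ) + 30 * (1 / r) + 25 * ((1 / r) * (1 / r)))
      = ((2 * r ^ 2 + 2 * r + 1 : ℕ) : ℝ) / (5 * ((2 * (r + 1) ^ 2 + 2 * (r + 1) + 1 : ℕ) : ℝ)) := by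
    filter_upwards [eventually_ge_atTop 1] with r hr
    have hr0 : (r : ℝ) ≠ 0 := by positivity
    have hden0 : (5 : ℝ) * ((2 * (r + 1) ^ 2 + 2 * (r + 1) + 1 : ℕ) : ℝ) ≠ 0 := by positivity
    push_cast
    field_simp
    ring
  have := hdiv.congr' heq
  norm_num at this ⊢
  exact this

end Aux

/-- Any dominating set of the square grid has upper density at least `1/5`. -/
theorem stmt_8 (X : Set (ℤ × ℤ)) (hX : ∀ v : ℤ × ℤ, (gridNbhd v ∩ X).Nonempty) :
    (1 : ℝ) / 5 ≤ upperDensity X := by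
  set f : ℕ → ℝ := fun r => ((X ∩ gridBall 0 r).ncard : ℝ) / ((gridBall 0 r).ncard) with hfdef
  have hball_pos : ∀ r : ℕ, (0 : ℝ) < ((gridBall 0 r).ncard : ℝ) := by
    intro r
    rw [ncard_gridBall]
    positivity
  have hfle : ∀ r, f r ≤ 1 := by
    intro r
    rw [hfdef]
    apply div_le_one_of_le₀
    · exact_mod_cast Nat.cast_le.mpr (Set.ncard_le_ncard Set.inter_subset_right
        (gridBall_finite r))
    · positivity
  have hbdd : IsBoundedUnder (· ≤ ·) atTop f := ⟨1, eventually_map.mpr (Eventually.of_forall hfle)⟩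
  -- the key lower bound
  have hlow : ∀ r : ℕ, ((2 * r ^ 2 + 2 * r + 1 : ℕ) : ℝ) /
      (5 * ((2 * (r + 1) ^ 2 + 2 * (r + 1) + 1 : ℕ) : ℝ)) ≤ f (r + 1) := by
    intro r
    have h5 := ball_le_five_mul X hX r
    rw [hfdef]
    have hb1 : ((gridBall 0 r).ncard : ℝ) = ((2 * r ^ 2 + 2 * r + 1 : ℕ) : ℝ) := by
      rw [ncard_gridBall]
    have hb2 : ((gridBall 0 (r+1)).ncard : ℝ) = ((2 * (r+1) ^ 2 + 2 * (r+1) + 1 : ℕ) : ℝ) := by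
      rw [ncard_gridBall]
    rw [div_le_div_iff₀ (by positivity) (hball_pos (r+1))]
    rw [← hb1, ← hb2]
    have : ((gridBall 0 r).ncard : ℝ) ≤ 5 * ((X ∩ gridBall 0 (r+1)).ncard : ℝ) := by
      exact_mod_cast h5
    nlinarith [(Nat.cast_nonneg ((X ∩ gridBall 0 (r+1)).ncard) : (0:ℝ) ≤ _),
      hball_pos (r+1), this]
  refine le_of_forall_pos_le_add fun ε hε => ?_
  have hev : ∀ᶠ r : ℕ in atTop, (1 : ℝ) / 5 - ε ≤ f r := by
    have hG := tendsto_ratio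
    have : ∀ᶠ r : ℕ in atTop, (1 : ℝ) / 5 - ε <
        ((2 * r ^ 2 + 2 * r + 1 : ℕ) : ℝ) /
          (5 * ((2 * (r + 1) ^ 2 + 2 * (r + 1) + 1 : ℕ) : ℝ)) :=
      hG.eventually (eventually_gt_nhds (by linarith))
    rw [eventually_atTop] at this ⊢
    obtain ⟨N, hN⟩ := this
    refine ⟨N + 1, fun r hr => ?_⟩
    obtain ⟨s, rfl⟩ : ∃ s, r = s + 1 := ⟨r - 1, by omega⟩
    exact le_of_lt (lt_of_lt_of_le (hN s (by omega)) (hlow s))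
  have := le_limsup_of_frequently_le hev.frequently hbdd
  calc (1 : ℝ) / 5 = (1 / 5 - ε) + ε := by ring
    _ ≤ upperDensity X + ε := by
        have : (1:ℝ)/5 - ε ≤ upperDensity X := this
        linarith
end

section
/- In the square grid on ℤ², any identifying code X has upper density at least 3/10. -/
open Filter

/-! ### Auxiliary finset machinery -/

/-- Finset version of the ℓ¹ ball around the origin. -/
noncomputable def fball (r : ℕ) : Finset (ℤ × ℤ) :=
  (Finset.Icc (-(r:ℤ)) r ×ˢ Finset.Icc (-(r:ℤ)) r).filter
    (fun p => p.1.natAbs + p.2.natAbs ≤ r)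

lemma mem_fball {p : ℤ × ℤ} {r : ℕ} : p ∈ fball r ↔ p.1.natAbs + p.2.natAbs ≤ r := by
  simp only [fball, Finset.mem_filter, Finset.mem_product, Finset.mem_Icc]
  constructor
  · tauto
  · intro h; omega

/-- Finset version of the closed neighborhood. -/
def fnb (v : ℤ × ℤ) : Finset (ℤ × ℤ) :=
  {v, (v.1 + 1, v.2), (v.1 - 1, v.2), (v.1, v.2 + 1), (v.1, v.2 - 1)}

lemma mem_fnb {p v : ℤ × ℤ} : p ∈ fnb v ↔ (p.1 - v.1).natAbs + (p.2 - v.2).natAbs ≤ 1 := by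
  simp only [fnb, Finset.mem_insert, Finset.mem_singleton, Prod.ext_iff]
  omega

lemma card_fnb_le (v : ℤ × ℤ) : (fnb v).card ≤ 5 := by
  refine le_trans (Finset.card_insert_le _ _) ?_
  refine le_trans (Nat.add_le_add_right (Finset.card_insert_le _ _) 1) ?_
  refine le_trans (Nat.add_le_add_right (Nat.add_le_add_right (Finset.card_insert_le _ _) 1) 1) ?_
  refine le_trans (Nat.add_le_add_right (Nat.add_le_add_right (Nat.add_le_add_right
    (Finset.card_insert_le _ _) 1) 1) 1) ?_
  simp

lemma coe_fball (r : ℕ) : gridBall 0 r = ↑(fball r) := by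
  ext p
  simp only [gridBall, Set.mem_setOf_eq, Finset.mem_coe, mem_fball, Prod.fst_zero,
    Prod.snd_zero, sub_zero, Int.abs_eq_natAbs]
  omega

lemma mem_gridNbhd_iff {p v : ℤ × ℤ} : p ∈ gridNbhd v ↔ p ∈ fnb v := by
  simp [gridNbhd, fnb]

lemma zero_mem_fball (r : ℕ) : (0 : ℤ × ℤ) ∈ fball r := by simp [mem_fball]

open scoped Classical in
lemma main_count (X : Set (ℤ × ℤ))
    (h1 : ∀ v, (gridNbhd v ∩ X).Nonempty)
    (h2 : ∀ u v, u ≠ v → gridNbhd u ∩ X ≠ gridNbhd v ∩ X) (r : ℕ) :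
    2 * (fball r).card ≤ 6 * ((fball (r+1)).filter (· ∈ X)).card := by
  set XB := (fball (r+1)).filter (· ∈ X) with hXB
  set g := fun v => ((fnb v).filter (· ∈ X)).card with hg
  have key1 : ∀ v ∈ fball r, (fnb v).filter (· ∈ X) = XB.filter (· ∈ fnb v) := by
    intro v hv
    ext c
    rw [mem_fball] at hv
    simp only [Finset.mem_filter, hXB, mem_fball, mem_fnb] at *
    constructor
    · rintro ⟨hc1, hc2⟩
      exact ⟨⟨by omega, hc2⟩, hc1⟩
    · rintro ⟨⟨_, hc2⟩, hc1⟩; exact ⟨hc1, hc2⟩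
  have upper : ∑ v ∈ fball r, g v ≤ 5 * XB.card := by
    calc ∑ v ∈ fball r, g v = ∑ v ∈ fball r, (XB.filter (· ∈ fnb v)).card :=
          Finset.sum_congr rfl fun v hv => congrArg Finset.card (key1 v hv)
      _ = ∑ v ∈ fball r, ∑ c ∈ XB, if c ∈ fnb v then 1 else 0 := by
          refine Finset.sum_congr rfl fun v _ => ?_
          rw [Finset.card_filter]
      _ = ∑ c ∈ XB, ∑ v ∈ fball r, if c ∈ fnb v then 1 else 0 := Finset.sum_comm
      _ = ∑ c ∈ XB, ((fball r).filter (fun v => c ∈ fnb v)).card := by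
          refine Finset.sum_congr rfl fun c _ => (Finset.card_filter _ _).symm
      _ ≤ ∑ _c ∈ XB, 5 := by
          refine Finset.sum_le_sum fun c _ => ?_
          refine le_trans (Finset.card_le_card ?_) (card_fnb_le c)
          intro v hv
          simp only [Finset.mem_filter, mem_fnb] at hv ⊢
          omega
      _ = 5 * XB.card := by rw [Finset.sum_const, smul_eq_mul, mul_comm]
  have hpos : ∀ v, 1 ≤ g v := by
    intro v
    obtain ⟨c, hc1, hc2⟩ := h1 v
    have : c ∈ (fnb v).filter (· ∈ X) :=
      Finset.mem_filter.2 ⟨mem_gridNbhd_iff.mp hc1, hc2⟩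
    exact Finset.card_pos.2 ⟨c, this⟩
  set L := (fball r).filter (fun v => g v = 1) with hL
  set f := fun v : ℤ × ℤ =>
    if h : ((fnb v).filter (· ∈ X)).Nonempty then h.choose else v with hf
  have hfmem : ∀ v ∈ L, ((fnb v).filter (· ∈ X)) = {f v} := by
    intro v hv
    simp only [hL, Finset.mem_filter, hg] at hv
    obtain ⟨a, ha⟩ := Finset.card_eq_one.mp hv.2
    have hne : ((fnb v).filter (· ∈ X)).Nonempty := ⟨a, by simp [ha]⟩
    have hmm : f v ∈ ((fnb v).filter (· ∈ X)) := by
      rw [hf]; simp only [dif_pos hne]; exact hne.choose_spec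
    rw [ha] at hmm ⊢
    rw [Finset.mem_singleton] at hmm
    rw [hmm]
  have hsets : ∀ w : ℤ × ℤ, gridNbhd w ∩ X = ↑((fnb w).filter (· ∈ X)) := by
    intro w; ext p
    simp only [Set.mem_inter_iff, Finset.coe_filter, Set.mem_setOf_eq,
      mem_gridNbhd_iff]
  have hcardL : L.card ≤ XB.card := by
    apply Finset.card_le_card_of_injOn f
    · intro v hv
      have h3 := hfmem v hv
      have h4 : f v ∈ (fnb v).filter (· ∈ X) := by rw [h3]; simp
      simp only [Finset.mem_filter, mem_fnb] at h4
      simp only [hL, Finset.mem_coe, Finset.mem_filter, mem_fball] at hv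
      simp only [hXB, Finset.mem_coe, Finset.mem_filter, mem_fball]
      refine ⟨?_, h4.2⟩
      have := hv.1
      omega
    · intro u hu v hv huv
      by_contra hne
      exact h2 u v hne (by rw [hsets u, hsets v, hfmem u hu, hfmem v hv, huv])
  have lower : 2 * (fball r).card ≤ (∑ v ∈ fball r, g v) + L.card := by
    have step : ∀ v ∈ fball r, 2 ≤ g v + (if v ∈ L then 1 else 0) := by
      intro v hv
      by_cases hgv : g v = 1
      · have hvL : v ∈ L := by rw [hL]; exact Finset.mem_filter.2 ⟨hv, hgv⟩
        simp [hvL, hgv]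
      · have := hpos v; split <;> omega
    calc 2 * (fball r).card = ∑ _v ∈ fball r, 2 := by
          rw [Finset.sum_const, smul_eq_mul, mul_comm]
      _ ≤ ∑ v ∈ fball r, (g v + (if v ∈ L then 1 else 0)) := Finset.sum_le_sum step
      _ = (∑ v ∈ fball r, g v) + ∑ v ∈ fball r, (if v ∈ L then 1 else 0) :=
          Finset.sum_add_distrib
      _ = (∑ v ∈ fball r, g v) + L.card := by
          rw [Finset.sum_ite_mem,
            Finset.inter_eq_right.mpr (by rw [hL]; exact Finset.filter_subset _ _),
            Finset.sum_const, smul_eq_mul, mul_one]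
  omega

lemma fball_card_lower (r : ℕ) : r * r ≤ (fball r).card := by
  have hsub : (Finset.Icc (-((r/2 : ℕ)):ℤ) (r/2 : ℕ) ×ˢ
      Finset.Icc (-((r/2 : ℕ)):ℤ) (r/2 : ℕ)) ⊆ fball r := by
    intro p hp
    simp only [Finset.mem_product, Finset.mem_Icc] at hp
    rw [mem_fball]
    obtain ⟨⟨a,b⟩,⟨c,d⟩⟩ := hp
    omega
  have hcard := Finset.card_le_card hsub
  rw [Finset.card_product, Int.card_Icc] at hcard
  refine le_trans ?_ hcard
  have h2 : ((r/2 : ℕ) + 1 - -(r/2 : ℕ) : ℤ).toNat = 2 * (r/2) + 1 := by omega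
  rw [h2]
  have : r ≤ 2 * (r/2) + 1 := by omega
  exact Nat.mul_le_mul this this

lemma fball_card_upper (r : ℕ) : (fball (r+1)).card ≤ (fball r).card + (4*r + 6) := by
  classical
  set S := (fball (r+1)).filter (fun p => p.1.natAbs + p.2.natAbs = r + 1) with hS
  have hsub : fball (r+1) ⊆ fball r ∪ S := by
    intro p hp
    rw [mem_fball] at hp
    rw [Finset.mem_union]
    by_cases h : p.1.natAbs + p.2.natAbs ≤ r
    · exact Or.inl (mem_fball.mpr h)
    · exact Or.inr (by rw [hS, Finset.mem_filter, mem_fball]; omega)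
  have hScard : S.card ≤ 4*r + 6 := by
    have hc2 : ({0, 1} : Finset ℕ).card = 2 := rfl
    have hmain : S.card ≤ ((Finset.Icc (-(r+1:ℤ)) (r+1)) ×ˢ ({0, 1} : Finset ℕ)).card := by
      apply Finset.card_le_card_of_injOn (fun p => (p.1, if 0 ≤ p.2 then 0 else 1))
      · intro p hp
        rw [hS, Finset.mem_coe, Finset.mem_filter, mem_fball] at hp
        simp only [Finset.mem_coe, Finset.mem_product, Finset.mem_Icc, Finset.mem_insert, Finset.mem_singleton]
        constructor
        · omega
        · split <;> simp
      · intro p hp q hq hpq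
        simp only [hS, Finset.mem_coe, Finset.mem_filter, mem_fball] at hp hq
        simp only [Prod.mk.injEq] at hpq
        obtain ⟨h1, h2⟩ := hpq
        obtain ⟨hp1, hp2⟩ := hp
        obtain ⟨hq1, hq2⟩ := hq
        rw [Prod.ext_iff]
        refine ⟨h1, ?_⟩
        by_cases c1 : (0:ℤ) ≤ p.2 <;> by_cases c2 : (0:ℤ) ≤ q.2 <;>
          simp only [c1, c2, if_true, if_false, if_pos, if_neg, not_false_iff] at h2 <;> omega
    refine le_trans hmain ?_
    rw [Finset.card_product, Int.card_Icc, hc2]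
    have : ((r:ℤ) + 1 + 1 - -(↑r + 1)).toNat = 2*r + 3 := by omega
    rw [this]
    omega
  calc (fball (r+1)).card ≤ (fball r ∪ S).card := Finset.card_le_card hsub
    _ ≤ (fball r).card + S.card := Finset.card_union_le _ _
    _ ≤ (fball r).card + (4*r + 6) := by omega

open scoped Classical in
lemma ratio_ge (X : Set (ℤ × ℤ))
    (h1 : ∀ v, (gridNbhd v ∩ X).Nonempty)
    (h2 : ∀ u v, u ≠ v → gridNbhd u ∩ X ≠ gridNbhd v ∩ X)
    (n : ℕ) (hn : 41 ≤ n) :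
    (3:ℝ)/10 ≤ (((fball n).filter (· ∈ X)).card : ℝ) / ((fball n).card : ℝ) := by
  obtain ⟨r, rfl⟩ : ∃ r, n = r + 1 := ⟨n - 1, by omega⟩
  have hr : 40 ≤ r := by omega
  have hmc := main_count X h1 h2 r
  have hlow := fball_card_lower r
  have hup := fball_card_upper r
  have h36 : 36*r + 54 ≤ r * r := by
    have h40 : 40 * r ≤ r * r := Nat.mul_le_mul_right r hr
    omega
  have key : 3 * (fball (r+1)).card ≤ 10 * ((fball (r+1)).filter (· ∈ X)).card := by
    omega
  have hpos : 0 < ((fball (r+1)).card : ℝ) := by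
    have : 0 < (fball (r+1)).card := Finset.card_pos.2 ⟨0, zero_mem_fball _⟩
    exact_mod_cast this
  rw [div_le_div_iff₀ (by norm_num) hpos]
  have hkey : (3:ℝ) * (fball (r+1)).card ≤
      10 * ((fball (r+1)).filter (· ∈ X)).card := by exact_mod_cast key
  linarith

/-- Any identifying code of the square grid has upper density at least `3/10`. -/
theorem stmt_10 (X : Set (ℤ × ℤ))
    (h1 : ∀ v : ℤ × ℤ, (gridNbhd v ∩ X).Nonempty)
    (h2 : ∀ u v : ℤ × ℤ, u ≠ v → gridNbhd u ∩ X ≠ gridNbhd v ∩ X) :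
    (3 : ℝ) / 10 ≤ upperDensity X := by
  classical
  set a : ℕ → ℝ :=
    fun n => ((X ∩ gridBall 0 n).ncard : ℝ) / ((gridBall 0 n).ncard) with ha
  have hX : ∀ n : ℕ, (X ∩ gridBall 0 n).ncard = ((fball n).filter (· ∈ X)).card := by
    intro n
    rw [coe_fball]
    have hset : X ∩ ↑(fball n) = ↑((fball n).filter (· ∈ X)) := by
      ext p
      simp only [Set.mem_inter_iff, Finset.coe_filter, Set.mem_setOf_eq, Finset.mem_coe]
      tauto
    rw [hset, Set.ncard_coe_finset]
  have hB : ∀ n : ℕ, (gridBall 0 n).ncard = (fball n).card := by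
    intro n; rw [coe_fball, Set.ncard_coe_finset]
  have hev : ∀ n, 41 ≤ n → (3:ℝ)/10 ≤ a n := by
    intro n hn
    rw [ha]
    simp only
    rw [hX, hB]
    exact ratio_ge X h1 h2 n hn
  have hbdd : IsBoundedUnder (· ≤ ·) atTop a := by
    refine isBoundedUnder_of ⟨1, fun n => ?_⟩
    rw [ha]
    simp only
    rw [hX, hB]
    have hposn : 0 < ((fball n).card : ℝ) := by
      have : 0 < (fball n).card := Finset.card_pos.2 ⟨0, zero_mem_fball _⟩
      exact_mod_cast this
    rw [div_le_one hposn]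
    exact_mod_cast Finset.card_le_card (Finset.filter_subset _ _)
  have hfreq : ∃ᶠ n in atTop, (3:ℝ)/10 ≤ a n :=
    (eventually_atTop.2 ⟨41, hev⟩).frequently
  exact le_limsup_of_frequently_le hfreq hbdd
end

section
/- Suppose G is an amenable grid, X ⊆ V(G), and μ' : V(G) → ℝ is obtained from the indicator function μ of X by a (c,d)-local discharging function among vertices only (i.e., μ'(v) = μ(v) + Σ_u D(u,v) where D is antisymmetric, |D(u,v)| ≤ c, and D(u,v) = 0 whenever dist(u,v) > d). If μ'(v) ≥ w for all vertices v, then the upper density of X is at least w. -/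
open Filter

/-- The ball of radius `r` around `v` in graph distance. -/
def gBall {V : Type*} (G : SimpleGraph V) (v : V) (r : ℕ) : Set V :=
  {w | G.dist w v ≤ r}

lemma mem_gBall {V : Type*} {G : SimpleGraph V} {v w : V} {r : ℕ} :
    w ∈ gBall G v r ↔ G.dist w v ≤ r := Iff.rfl

lemma gBall_ncard_le {V : Type*} {G : SimpleGraph V} (hc : G.Connected)
    (hfin : ∀ (v : V) (r : ℕ), (gBall G v r).Finite)
    {Δ : ℕ} (hdeg : ∀ v : V, (G.neighborSet v).ncard ≤ Δ) :
    ∀ (k : ℕ) (u : V), (gBall G u k).ncard ≤ (Δ + 1) ^ k := by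
  classical
  intro k
  induction k with
  | zero =>
    intro u
    have h0 : gBall G u 0 = {u} := by
      ext x
      simp only [mem_gBall, Nat.le_zero, Set.mem_singleton_iff]
      constructor
      · intro h; exact ((hc x u).dist_eq_zero_iff).mp h
      · rintro rfl; simp [SimpleGraph.dist_self]
    simp [h0]
  | succ k ih =>
    intro u
    have hNfin : ∀ x : V, (G.neighborSet x).Finite := by
      intro x
      refine (hfin x 1).subset ?_
      intro y hy
      have hadj : G.Adj y x := ((SimpleGraph.mem_neighborSet G x y).mp hy).symm
      exact SimpleGraph.dist_le (SimpleGraph.Walk.cons hadj SimpleGraph.Walk.nil)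
    set Fk : Finset V := (hfin u k).toFinset with hFk
    set Big : Finset V := Fk.biUnion (fun x => insert x (hNfin x).toFinset) with hBig
    have hsub : gBall G u (k + 1) ⊆ ↑Big := by
      intro x hx
      by_cases hk : G.dist x u ≤ k
      · simp only [hBig, Finset.coe_biUnion, Set.mem_iUnion, Finset.mem_coe]
        exact ⟨x, by simpa [hFk, Set.Finite.mem_toFinset, mem_gBall] using hk,
          Finset.mem_insert_self _ _⟩
      · have hdx : G.dist x u = k + 1 := le_antisymm hx (by omega)
        obtain ⟨p, hp⟩ := (hc x u).exists_walk_length_eq_dist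
        cases p with
        | nil => rw [SimpleGraph.dist_self] at hdx; omega
        | @cons _ y _ h q =>
          have hq : q.length = k := by
            simp [SimpleGraph.Walk.length_cons, hdx] at hp; omega
          have hy : y ∈ Fk := by
            simp only [hFk, Set.Finite.mem_toFinset, mem_gBall]
            exact (SimpleGraph.dist_le q).trans hq.le
          simp only [hBig, Finset.coe_biUnion, Set.mem_iUnion, Finset.mem_coe]
          refine ⟨y, hy, Finset.mem_insert_of_mem ?_⟩
          simp [Set.Finite.mem_toFinset, SimpleGraph.mem_neighborSet]
          exact h.symm
    have h1 : (gBall G u (k + 1)).ncard ≤ Big.card := by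
      have := Set.ncard_le_ncard hsub (Big.finite_toSet)
      simpa [Set.ncard_coe_finset] using this
    have h2 : Big.card ≤ Fk.card * (Δ + 1) := by
      refine Finset.card_biUnion_le_card_mul _ _ _ ?_
      intro x _
      have : ((hNfin x).toFinset).card ≤ Δ := by
        rw [← Set.ncard_coe_finset, Set.Finite.coe_toFinset]; exact hdeg x
      calc (insert x (hNfin x).toFinset).card ≤ (hNfin x).toFinset.card + 1 :=
            Finset.card_insert_le _ _
        _ ≤ Δ + 1 := by omega
    have h3 : Fk.card ≤ (Δ + 1) ^ k := by
      have := ih u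
      rwa [show (gBall G u k).ncard = Fk.card by
        rw [hFk, ← Set.ncard_coe_finset, Set.Finite.coe_toFinset]] at this
    calc (gBall G u (k + 1)).ncard ≤ Fk.card * (Δ + 1) := h1.trans h2
      _ ≤ (Δ + 1) ^ k * (Δ + 1) := by exact Nat.mul_le_mul_right _ h3
      _ = (Δ + 1) ^ (k + 1) := by ring

/-- A `(c,d)`-local discharging function among vertices which leaves every
vertex with charge at least `w` certifies that the upper density of `X` is at
least `w`. -/
theorem stmt_15 {V : Type*} (G : SimpleGraph V) (hc : G.Connected)
    (hfin : ∀ (v : V) (r : ℕ), (gBall G v r).Finite)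
    (Δ : ℕ) (hdeg : ∀ v : V, (G.neighborSet v).ncard ≤ Δ)
    (hamen : ∀ (v : V) (d : ℕ),
      Filter.Tendsto
        (fun r : ℕ => (((gBall G v (r + d) \ gBall G v r).ncard : ℝ) / ((gBall G v r).ncard)))
        Filter.atTop (nhds 0))
    (X : Set V) (v₀ : V) (c : ℝ) (d : ℕ) (w : ℝ)
    (D : V → V → ℝ)
    (hanti : ∀ u v : V, D u v = -D v u)
    (hbound : ∀ u v : V, |D u v| ≤ c)
    (hlocal : ∀ u v : V, (d : ℕ) < G.dist u v → D u v = 0)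
    (hcharge : ∀ v : V, w ≤ X.indicator (fun _ => (1 : ℝ)) v + ∑ᶠ u : V, D u v) :
    w ≤ Filter.limsup
        (fun r : ℕ => ((X ∩ gBall G v₀ r).ncard : ℝ) / ((gBall G v₀ r).ncard))
        Filter.atTop := by
  classical
  set C : ℝ := c * ((Δ + 1) ^ d : ℕ) with hCdef
  have hc0 : 0 ≤ c := (abs_nonneg _).trans (hbound v₀ v₀)
  have hC0 : 0 ≤ C := mul_nonneg hc0 (by positivity)
  -- the key finite inequality for each radius r
  have key : ∀ r : ℕ, w * ((gBall G v₀ r).ncard : ℝ) ≤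
      ((X ∩ gBall G v₀ r).ncard : ℝ) +
        C * (((gBall G v₀ (r + d) \ gBall G v₀ r).ncard : ℝ)) := by
    intro r
    set S : Finset V := (hfin v₀ r).toFinset with hSdef
    set T : Finset V := (hfin v₀ (r + d)).toFinset with hTdef
    have hST : S ⊆ T := by
      intro x hx
      simp only [hSdef, hTdef, Set.Finite.mem_toFinset, mem_gBall] at *
      omega
    -- rewrite the finsum as a finite sum over T
    have hsum : ∀ v ∈ S, (∑ᶠ u : V, D u v) = ∑ u ∈ T, D u v := by
      intro v hv
      refine finsum_eq_sum_of_support_subset _ ?_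
      intro u hu
      have hduv : G.dist u v ≤ d := by
        by_contra hgt
        exact hu (hlocal u v (by omega))
      have hvr : G.dist v v₀ ≤ r := by
        simpa [hSdef, Set.Finite.mem_toFinset, mem_gBall] using hv
      have htri : G.dist u v₀ ≤ G.dist u v + G.dist v v₀ := hc.dist_triangle
      simp only [hTdef, Finset.coe_sort_coe, Set.Finite.coe_toFinset, mem_gBall]
      omega
    -- summing the charge inequality over S
    have h1 : w * (S.card : ℝ) ≤
        (∑ v ∈ S, X.indicator (fun _ => (1 : ℝ)) v) + ∑ v ∈ S, ∑ u ∈ T, D u v := by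
      calc w * (S.card : ℝ) = ∑ _v ∈ S, w := by
            rw [Finset.sum_const, nsmul_eq_mul, mul_comm]
        _ ≤ ∑ v ∈ S, (X.indicator (fun _ => (1 : ℝ)) v + ∑ u ∈ T, D u v) := by
            refine Finset.sum_le_sum fun v hv => ?_
            have := hcharge v
            rwa [hsum v hv] at this
        _ = _ := Finset.sum_add_distrib
    -- the indicator sum equals the cardinality of X ∩ ball
    have hXcard : (∑ v ∈ S, X.indicator (fun _ => (1 : ℝ)) v) =
        ((X ∩ gBall G v₀ r).ncard : ℝ) := by
      rw [show X ∩ gBall G v₀ r = ↑(S.filter (· ∈ X)) by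
        ext x
        simp [hSdef, Set.Finite.mem_toFinset, and_comm],
        Set.ncard_coe_finset]
      rw [Finset.sum_indicator_eq_sum_filter]
      simp
    -- interior exchanges cancel
    have cancel : (∑ v ∈ S, ∑ u ∈ S, D u v) = 0 := by
      have h := calc (∑ v ∈ S, ∑ u ∈ S, D u v)
            = ∑ v ∈ S, ∑ u ∈ S, -D v u := by simp_rw [← hanti]
        _ = -∑ v ∈ S, ∑ u ∈ S, D v u := by simp
        _ = -∑ v ∈ S, ∑ u ∈ S, D u v := by rw [Finset.sum_comm]
      linarith
    -- boundary exchanges are small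
    have hinner : ∀ u : V, |∑ v ∈ S, D u v| ≤ C := by
      intro u
      have step1 : |∑ v ∈ S, D u v| ≤ ∑ v ∈ S, |D u v| := Finset.abs_sum_le_sum_abs _ _
      have step2 : (∑ v ∈ S, |D u v|) = ∑ v ∈ S.filter (· ∈ gBall G u d), |D u v| := by
        refine (Finset.sum_filter_of_ne ?_).symm
        intro v _ hne
        have hduv : G.dist u v ≤ d := by
          by_contra hgt
          exact hne (by simp [hlocal u v (by omega)])
        simpa [mem_gBall, SimpleGraph.dist_comm] using hduv
      have step3 : (∑ v ∈ S.filter (· ∈ gBall G u d), |D u v|) ≤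
          ((S.filter (· ∈ gBall G u d)).card : ℝ) * c := by
        calc (∑ v ∈ S.filter (· ∈ gBall G u d), |D u v|) ≤
            ∑ _v ∈ S.filter (· ∈ gBall G u d), c :=
              Finset.sum_le_sum fun v _ => hbound u v
          _ = _ := by rw [Finset.sum_const, nsmul_eq_mul]
      have step4 : (S.filter (· ∈ gBall G u d)).card ≤ (Δ + 1) ^ d := by
        have hsub : S.filter (· ∈ gBall G u d) ⊆ (hfin u d).toFinset := by
          intro x hx
          simp only [Finset.mem_filter] at hx
          simpa [Set.Finite.mem_toFinset] using hx.2
        have := Finset.card_le_card hsub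
        have h2 : (hfin u d).toFinset.card = (gBall G u d).ncard := by
          rw [← Set.ncard_coe_finset, Set.Finite.coe_toFinset]
        have h3 := gBall_ncard_le hc hfin hdeg d u
        omega
      calc |∑ v ∈ S, D u v| ≤ ((S.filter (· ∈ gBall G u d)).card : ℝ) * c :=
            step1.trans (step2.le.trans step3)
        _ ≤ (((Δ + 1) ^ d : ℕ) : ℝ) * c := by
            refine mul_le_mul_of_nonneg_right ?_ hc0
            exact_mod_cast step4
        _ = C := by rw [hCdef, mul_comm]
    have hbd : (∑ v ∈ S, ∑ u ∈ T \ S, D u v) ≤ C * ((T \ S).card : ℝ) := by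
      calc (∑ v ∈ S, ∑ u ∈ T \ S, D u v) = ∑ u ∈ T \ S, ∑ v ∈ S, D u v :=
            Finset.sum_comm
        _ ≤ ∑ u ∈ T \ S, |∑ v ∈ S, D u v| := Finset.sum_le_sum fun u _ => le_abs_self _
        _ ≤ ∑ _u ∈ T \ S, C := Finset.sum_le_sum fun u _ => hinner u
        _ = C * ((T \ S).card : ℝ) := by rw [Finset.sum_const, nsmul_eq_mul, mul_comm]
    -- split the double sum
    have hsplit : (∑ v ∈ S, ∑ u ∈ T, D u v) = ∑ v ∈ S, ∑ u ∈ T \ S, D u v := by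
      have : ∀ v ∈ S, (∑ u ∈ T, D u v) = (∑ u ∈ T \ S, D u v) + ∑ u ∈ S, D u v :=
        fun v _ => (Finset.sum_sdiff hST).symm
      rw [Finset.sum_congr rfl this, Finset.sum_add_distrib, cancel, add_zero]
    -- cardinality translations
    have hScard : (S.card : ℝ) = ((gBall G v₀ r).ncard : ℝ) := by
      rw [hSdef, ← Set.ncard_coe_finset, Set.Finite.coe_toFinset]
    have hTScard : ((T \ S).card : ℝ) =
        ((gBall G v₀ (r + d) \ gBall G v₀ r).ncard : ℝ) := by
      rw [show gBall G v₀ (r + d) \ gBall G v₀ r = ↑(T \ S) by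
        ext x
        simp [hSdef, hTdef, Set.Finite.mem_toFinset], Set.ncard_coe_finset]
    calc w * ((gBall G v₀ r).ncard : ℝ) = w * (S.card : ℝ) := by rw [hScard]
      _ ≤ (∑ v ∈ S, X.indicator (fun _ => (1 : ℝ)) v) + ∑ v ∈ S, ∑ u ∈ T, D u v := h1
      _ = ((X ∩ gBall G v₀ r).ncard : ℝ) + ∑ v ∈ S, ∑ u ∈ T \ S, D u v := by
          rw [hXcard, hsplit]
      _ ≤ ((X ∩ gBall G v₀ r).ncard : ℝ) + C * ((T \ S).card : ℝ) := by linarith [hbd]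
      _ = _ := by rw [hTScard]
  -- analytic part
  set f : ℕ → ℝ := fun r => ((X ∩ gBall G v₀ r).ncard : ℝ) / ((gBall G v₀ r).ncard)
  set g : ℕ → ℝ := fun r =>
    C * (((gBall G v₀ (r + d) \ gBall G v₀ r).ncard : ℝ) / ((gBall G v₀ r).ncard))
  have hpos : ∀ r : ℕ, (0 : ℝ) < ((gBall G v₀ r).ncard : ℝ) := by
    intro r
    have : 0 < (gBall G v₀ r).ncard :=
      (Set.ncard_pos (hfin v₀ r)).mpr ⟨v₀, by simp [mem_gBall, SimpleGraph.dist_self]⟩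
    exact_mod_cast this
  have hfg : ∀ r : ℕ, w ≤ f r + g r := by
    intro r
    have h := key r
    have hn := hpos r
    rw [← le_div_iff₀ hn] at h
    · calc w ≤ (((X ∩ gBall G v₀ r).ncard : ℝ) +
            C * (((gBall G v₀ (r + d) \ gBall G v₀ r).ncard : ℝ))) /
            ((gBall G v₀ r).ncard : ℝ) := h
        _ = f r + g r := by
            simp only [f, g]
            rw [add_div, mul_div_assoc]
  have hf1 : ∀ r : ℕ, f r ≤ 1 := by
    intro r
    refine div_le_one_of_le₀ ?_ (hpos r).le
    have := Set.ncard_le_ncard (Set.inter_subset_right (s := X)) (hfin v₀ r)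
    exact_mod_cast this
  have hg0 : Tendsto g atTop (nhds 0) := by
    have := (hamen v₀ d).const_mul C
    simpa using this
  have hbdd : IsBoundedUnder (· ≤ ·) atTop f := isBoundedUnder_of ⟨1, hf1⟩
  refine le_of_forall_pos_le_add ?_
  intro ε hε
  have hev : ∀ᶠ r in atTop, g r < ε := hg0.eventually_lt_const hε
  have hev2 : ∀ᶠ r in atTop, w - ε ≤ f r := by
    filter_upwards [hev] with r hr
    have := hfg r
    linarith
  have := le_limsup_of_frequently_le hev2.frequently hbdd
  linarith
end

section
/- In the square grid on ℤ², any locating-dominating code has upper density at least 1/4. -/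
open Filter

noncomputable def Bf (r : ℕ) : Finset (ℤ × ℤ) :=
  (Finset.Icc (-(r:ℤ)) r ×ˢ Finset.Icc (-(r:ℤ)) r).filter
    (fun p => p.1.natAbs + p.2.natAbs ≤ r)

lemma mem_Bf {r : ℕ} {p : ℤ × ℤ} : p ∈ Bf r ↔ p.1.natAbs + p.2.natAbs ≤ r := by
  simp only [Bf, Finset.mem_filter, Finset.mem_product, Finset.mem_Icc]
  constructor
  · tauto
  · intro h; refine ⟨⟨?_, ?_⟩, h⟩ <;> omega

lemma coe_Bf (r : ℕ) : gridBall 0 r = ↑(Bf r) := by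
  ext p
  simp only [gridBall, Set.mem_setOf_eq, Finset.coe_filter, mem_Bf, Finset.mem_coe,
    Prod.fst_zero, Prod.snd_zero, sub_zero, Int.abs_eq_natAbs]
  omega

lemma sum_abs_Icc (r : ℕ) : (∑ x ∈ Finset.Icc (-(r:ℤ)) r, |x|) = r * (r+1) := by
  induction r with
  | zero => simp
  | succ n ih =>
    have hins : Finset.Icc (-((n+1:ℕ):ℤ)) ((n+1:ℕ):ℤ)
        = insert ((n:ℤ)+1) (insert (-((n:ℤ)+1)) (Finset.Icc (-(n:ℤ)) n)) := by
      ext x; simp [Finset.mem_Icc]; push_cast; omega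
    rw [hins, Finset.sum_insert (by simp only [Finset.mem_insert, Finset.mem_Icc]; omega),
      Finset.sum_insert (by simp only [Finset.mem_Icc]; omega), ih]
    have h1 : |(n:ℤ)+1| = (n:ℤ)+1 := abs_of_nonneg (by positivity)
    have h2 : |-((n:ℤ)+1)| = (n:ℤ)+1 := by rw [abs_neg]; exact h1
    rw [h1, h2]; push_cast; ring

lemma card_Bf (r : ℕ) : (Bf r).card = 2*r^2 + 2*r + 1 := by
  have hfib : ∀ x ∈ Finset.Icc (-(r:ℤ)) r,
      ((Bf r).filter (fun p => p.1 = x)).card = (2*((r:ℤ) - |x|) + 1).toNat := by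
    intro x hx
    simp only [Finset.mem_Icc] at hx
    have hfe : (Bf r).filter (fun p => p.1 = x)
        = {x} ×ˢ Finset.Icc (-((r:ℤ) - |x|)) ((r:ℤ) - |x|) := by
      ext ⟨a, b⟩
      simp only [Finset.mem_filter, mem_Bf, Finset.mem_product, Finset.mem_singleton,
        Finset.mem_Icc]
      constructor
      · rintro ⟨h, rfl⟩; simp only [Int.abs_eq_natAbs]; refine ⟨by trivial, ?_, ?_⟩ <;> omega
      · rintro ⟨rfl, h⟩; simp only [Int.abs_eq_natAbs] at h; refine ⟨?_, rfl⟩; omega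
    rw [hfe, Finset.card_product, Finset.card_singleton, one_mul, Int.card_Icc]
    congr 1; omega
  have hfw := Finset.card_eq_sum_card_fiberwise (f := Prod.fst) (t := Finset.Icc (-(r:ℤ)) r)
    (s := Bf r) (fun p hp => by rw [Finset.mem_coe, mem_Bf] at hp; simp [Finset.mem_Icc]; omega)
  rw [hfw, Finset.sum_congr rfl hfib]
  have hcast : ((∑ x ∈ Finset.Icc (-(r:ℤ)) r, (2*((r:ℤ) - |x|) + 1).toNat : ℕ) : ℤ)
      = ∑ x ∈ Finset.Icc (-(r:ℤ)) r, (2*((r:ℤ) - |x|) + 1) := by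
    rw [Nat.cast_sum]
    refine Finset.sum_congr rfl (fun x hx => ?_)
    simp only [Finset.mem_Icc] at hx
    rw [Int.toNat_of_nonneg]
    simp only [Int.abs_eq_natAbs]; omega
  have hsum : ∑ x ∈ Finset.Icc (-(r:ℤ)) r, (2*((r:ℤ) - |x|) + 1)
      = 2*(r:ℤ)^2 + 2*r + 1 := by
    calc ∑ x ∈ Finset.Icc (-(r:ℤ)) r, (2*((r:ℤ) - |x|) + 1)
        = ∑ x ∈ Finset.Icc (-(r:ℤ)) r, ((2*(r:ℤ)+1) - 2*|x|) :=
          Finset.sum_congr rfl (fun x _ => by ring)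
      _ = (Finset.Icc (-(r:ℤ)) r).card • (2*(r:ℤ)+1) - 2 * ∑ x ∈ Finset.Icc (-(r:ℤ)) r, |x| := by
          rw [Finset.sum_sub_distrib, Finset.sum_const, Finset.mul_sum]
      _ = 2*(r:ℤ)^2 + 2*r + 1 := by
          rw [Int.card_Icc, sum_abs_Icc]
          have hc : ((r:ℤ)+1 - -(r:ℤ)).toNat = 2*r+1 := by omega
          rw [hc]
          push_cast; ring
  have : ((∑ x ∈ Finset.Icc (-(r:ℤ)) r, (2*((r:ℤ) - |x|) + 1).toNat : ℕ) : ℤ)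
      = ((2*r^2 + 2*r + 1 : ℕ) : ℤ) := by rw [hcast, hsum]; push_cast; ring
  exact_mod_cast this

def nb (v : ℤ × ℤ) : Finset (ℤ × ℤ) :=
  {(v.1 + 1, v.2), (v.1 - 1, v.2), (v.1, v.2 + 1), (v.1, v.2 - 1)}

lemma coe_nb (v : ℤ × ℤ) : (↑(nb v) : Set (ℤ × ℤ)) = gridOpenNbhd v := by
  ext c; simp [nb, gridOpenNbhd]

lemma card_nb_le (v : ℤ × ℤ) : (nb v).card ≤ 4 := by
  unfold nb
  refine le_trans (Finset.card_insert_le _ _) ?_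
  refine Nat.succ_le_succ (le_trans (Finset.card_insert_le _ _) ?_)
  refine Nat.succ_le_succ (le_trans (Finset.card_insert_le _ _) ?_)
  simp

lemma nb_symm {u v : ℤ × ℤ} : u ∈ nb v ↔ v ∈ nb u := by
  simp only [nb, Finset.mem_insert, Finset.mem_singleton, Prod.ext_iff]
  omega

lemma mem_nb_ball {r : ℕ} {v c : ℤ × ℤ} (hv : v ∈ Bf r) (hc : c ∈ nb v) :
    c ∈ Bf (r+1) := by
  rw [mem_Bf] at hv ⊢
  simp only [nb, Finset.mem_insert, Finset.mem_singleton, Prod.ext_iff] at hc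
  rcases hc with ⟨h1, h2⟩ | ⟨h1, h2⟩ | ⟨h1, h2⟩ | ⟨h1, h2⟩ <;> rw [h1, h2] <;> omega

open scoped Classical in
lemma inter_eq (X : Set (ℤ × ℤ)) (v : ℤ × ℤ) :
    gridOpenNbhd v ∩ X = ↑((nb v).filter (fun c => c ∈ X)) := by
  ext c
  simp [← coe_nb, Set.mem_inter_iff, and_comm]

open scoped Classical in
lemma count_key (X : Set (ℤ × ℤ))
    (h1 : ∀ v : ℤ × ℤ, v ∉ X → (gridOpenNbhd v ∩ X).Nonempty)
    (h2 : ∀ u v : ℤ × ℤ, u ∉ X → v ∉ X → u ≠ v →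
      gridOpenNbhd u ∩ X ≠ gridOpenNbhd v ∩ X) (r : ℕ) :
    2 * (Bf r).card ≤ 7 * ((Bf (r+1)).filter (fun c => c ∈ X)).card := by
  set K := (Bf (r+1)).filter (fun c => c ∈ X) with hK
  set D := (Bf r).filter (fun v => v ∉ X) with hD
  set t : ℤ × ℤ → ℕ := fun v => ((nb v).filter (fun c => c ∈ X)).card with ht
  have htpos : ∀ v ∈ D, 1 ≤ t v := by
    intro v hv
    rw [hD, Finset.mem_filter] at hv
    obtain ⟨c, hc⟩ := h1 v hv.2
    rw [inter_eq] at hc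
    exact Finset.card_pos.mpr ⟨c, by exact_mod_cast hc⟩
  set D1 := D.filter (fun v => t v = 1) with hD1
  have hD1D : D1 ⊆ D := Finset.filter_subset _ _
  have hD1K : D1.card ≤ K.card := by
    have hex : ∀ v ∈ D1, ∃ c, (nb v).filter (fun c => c ∈ X) = {c} := by
      intro v hv
      rw [hD1, Finset.mem_filter] at hv
      exact Finset.card_eq_one.mp hv.2
    set g : ℤ × ℤ → ℤ × ℤ := fun v =>
      if h : ∃ c, (nb v).filter (fun c => c ∈ X) = {c} then h.choose else v with hg
    have hgspec : ∀ v ∈ D1, (nb v).filter (fun c => c ∈ X) = {g v} := by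
      intro v hv
      have h := hex v hv
      simp only [hg, dif_pos h]
      exact h.choose_spec
    apply Finset.card_le_card_of_injOn g
    · intro v hv
      have hs := hgspec v hv
      have hgm : g v ∈ (nb v).filter (fun c => c ∈ X) := by
        rw [hs]; exact Finset.mem_singleton_self _
      rw [Finset.mem_filter] at hgm
      have hvB : v ∈ Bf r := Finset.mem_of_mem_filter v (hD1D hv)
      simp only [Finset.mem_coe, hK, Finset.mem_filter]
      exact ⟨mem_nb_ball hvB hgm.1, hgm.2⟩
    · intro u hu v hv huv
      by_contra hne
      have hu' : u ∉ X := (Finset.mem_filter.mp (hD1D hu)).2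
      have hv' : v ∉ X := (Finset.mem_filter.mp (hD1D hv)).2
      apply h2 u v hu' hv' hne
      rw [inter_eq, inter_eq, hgspec u hu, hgspec v hv, huv]
  -- lower bound for the sum
  have hlow : 2 * D.card - D1.card ≤ ∑ v ∈ D, t v := by
    have hsplit := Finset.sum_filter_add_sum_filter_not D (fun v => t v = 1) t
    have hs1 : ∑ v ∈ D.filter (fun v => t v = 1), t v = D1.card := by
      rw [hD1]
      rw [Finset.sum_congr rfl (fun v hv => (Finset.mem_filter.mp hv).2)]
      simp [mul_comm]
    have hs2 : 2 * (D.filter (fun v => ¬ t v = 1)).card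
        ≤ ∑ v ∈ D.filter (fun v => ¬ t v = 1), t v := by
      have h := Finset.card_nsmul_le_sum (D.filter (fun v => ¬ t v = 1)) t 2
        (fun v hv => by
          rw [Finset.mem_filter] at hv
          have := htpos v hv.1
          omega)
      rw [smul_eq_mul, mul_comm] at h
      exact h
    have hcards := Finset.card_filter_add_card_filter_not (s := D) (p := fun v => t v = 1)
    rw [← hD1] at hcards
    omega
  -- upper bound for the sum
  have hup : ∑ v ∈ D, t v ≤ 4 * K.card := by
    have hswap : ∑ v ∈ D, t v = ∑ c ∈ K, (D.filter (fun v => c ∈ nb v)).card := by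
      have h1d : ∀ v ∈ D, t v = (K.filter (fun c => c ∈ nb v)).card := by
        intro v hv
        have hvB : v ∈ Bf r := Finset.mem_of_mem_filter v hv
        rw [ht]
        have hfe : (nb v).filter (fun c => c ∈ X) = K.filter (fun c => c ∈ nb v) := by
          ext c
          simp only [Finset.mem_filter, hK]
          constructor
          · rintro ⟨hc1, hc2⟩; exact ⟨⟨mem_nb_ball hvB hc1, hc2⟩, hc1⟩
          · rintro ⟨⟨_, hc2⟩, hc3⟩; exact ⟨hc3, hc2⟩
        simp only []
        rw [hfe]
      rw [Finset.sum_congr rfl h1d]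
      simp only [Finset.card_filter]
      exact Finset.sum_comm
    rw [hswap]
    calc ∑ c ∈ K, (D.filter (fun v => c ∈ nb v)).card
        ≤ ∑ _c ∈ K, 4 := by
          refine Finset.sum_le_sum (fun c _ => ?_)
          refine le_trans (Finset.card_le_card ?_) (card_nb_le c)
          intro v hv
          rw [Finset.mem_filter] at hv
          exact nb_symm.mp hv.2
      _ = 4 * K.card := by rw [Finset.sum_const, smul_eq_mul, mul_comm]
  -- cardinality of codewords inside of Bf r
  have hXr : ((Bf r).filter (fun c => c ∈ X)).card + D.card = (Bf r).card := by
    rw [hD]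
    exact Finset.card_filter_add_card_filter_not (p := fun v => v ∈ X)
  have hXrK : ((Bf r).filter (fun c => c ∈ X)).card ≤ K.card := by
    refine Finset.card_le_card (fun c hc => ?_)
    rw [Finset.mem_filter] at hc ⊢
    rw [mem_Bf] at hc ⊢
    exact ⟨by omega, hc.2⟩
  omega

theorem aux_stmt_19 (X : Set (ℤ × ℤ))
    (h1 : ∀ v : ℤ × ℤ, v ∉ X → (gridOpenNbhd v ∩ X).Nonempty)
    (h2 : ∀ u v : ℤ × ℤ, u ∉ X → v ∉ X → u ≠ v →
      gridOpenNbhd u ∩ X ≠ gridOpenNbhd v ∩ X) :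
    (1 : ℝ) / 4 ≤ Filter.limsup
      (fun r : ℕ => ((X ∩ gridBall 0 r).ncard : ℝ) / ((gridBall 0 r).ncard))
      Filter.atTop := by
  classical
  set f : ℕ → ℝ := fun s => ((X ∩ gridBall 0 s).ncard : ℝ) / ((gridBall 0 s).ncard) with hf
  have hcard : ∀ s, (gridBall 0 s).ncard = (Bf s).card := by
    intro s; rw [coe_Bf]; exact Set.ncard_coe_finset _
  have hXcard : ∀ s, (X ∩ gridBall 0 s).ncard = ((Bf s).filter (fun c => c ∈ X)).card := by
    intro s
    rw [coe_Bf]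
    have he : X ∩ ↑(Bf s) = ↑((Bf s).filter (fun c => c ∈ X)) := by
      ext c; simp [Set.mem_inter_iff, and_comm]
    rw [he, Set.ncard_coe_finset]
  have hb1 : ∀ s, f s ≤ 1 := by
    intro s
    rw [hf]
    apply div_le_one_of_le₀
    · refine Nat.cast_le.mpr (Set.ncard_le_ncard Set.inter_subset_right ?_)
      rw [coe_Bf]; exact (Bf s).finite_toSet
    · positivity
  have hub : IsBoundedUnder (· ≤ ·) atTop f :=
    ⟨1, eventually_map.mpr (Eventually.of_forall hb1)⟩
  have hev : ∀ᶠ s in atTop, (1:ℝ)/4 ≤ f s := by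
    filter_upwards [eventually_ge_atTop 15] with s hs
    obtain ⟨r, rfl⟩ : ∃ r, s = r + 1 := ⟨s - 1, by omega⟩
    have hr : 14 ≤ r := by omega
    have hkey := count_key X h1 h2 r
    have h4 : (Bf (r+1)).card ≤ 4 * ((Bf (r+1)).filter (fun c => c ∈ X)).card := by
      rw [card_Bf] at hkey ⊢
      have hq : 14 * r ≤ r * r := Nat.mul_le_mul_right r hr
      have e1 : r^2 = r*r := sq r
      have e2 : (r+1)^2 = r*r + 2*r + 1 := by ring
      rw [e1] at hkey
      rw [e2]
      omega
    rw [hf]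
    simp only
    rw [hXcard, hcard, card_Bf]
    have hb0 : (0:ℝ) < ((2*(r+1)^2+2*(r+1)+1 : ℕ) : ℝ) := by positivity
    rw [div_le_div_iff₀ (by norm_num) hb0]
    have hc : ((2*(r+1)^2+2*(r+1)+1 : ℕ) : ℝ) ≤ ((4 * ((Bf (r+1)).filter (fun c => c ∈ X)).card : ℕ) : ℝ) := Nat.cast_le.mpr (by rw [← card_Bf]; exact h4)
    push_cast at hc ⊢
    linarith
  exact le_limsup_of_frequently_le hev.frequently hub

/-- Any locating-dominating code of the square grid has upper density at least `1/4`. -/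
theorem stmt_19 (X : Set (ℤ × ℤ))
    (h1 : ∀ v : ℤ × ℤ, v ∉ X → (gridOpenNbhd v ∩ X).Nonempty)
    (h2 : ∀ u v : ℤ × ℤ, u ∉ X → v ∉ X → u ≠ v →
      gridOpenNbhd u ∩ X ≠ gridOpenNbhd v ∩ X) :
    (1 : ℝ) / 4 ≤ upperDensity X := by
  unfold upperDensity
  exact aux_stmt_19 X h1 h2
end
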